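/- Let q > 1 and let ρ be C², positive, 2π-periodic with (ln ρ)''(t) < √q/(1+√q) for all t. For fixed j ∈ {1,2}, let θ(θ_η) denote the solution branch of (ln ρ)'(θ) = √q sin(θ−θ_η)/(√q cos(θ−θ_η)+1) with (−1)^{j−1}(√q·cos(θ−θ_η)+1) > 0. Then θ is a C¹ function of θ_η with dθ/dθ_η = √(q + (q−1)·(ln ρ)'(θ)²) / (√(q + (q−1)·(ln ρ)'(θ)²) + (−1)^{j}·(√q·cos(θ−θ_η)+1)·(ln ρ)''(θ)) > 0. -/

import Mathlib

open Real Topology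

set_option maxHeartbeats 1000000 in
theorem stmt_19 (q : ℝ) (hq : 1 < q) (ρ : ℝ → ℝ)
    (hC2 : ContDiff ℝ 2 ρ) (hpos : ∀ t, 0 < ρ t)
    (hper : ∀ t, ρ (t + 2 * π) = ρ t)
    (hadm : ∀ t, deriv (deriv (fun s => Real.log (ρ s))) t < Real.sqrt q / (1 + Real.sqrt q))
    (j : ℕ) (hj : j = 1 ∨ j = 2)
    (Θ : ℝ → ℝ) (hΘcont : Continuous Θ)
    (hbranch : ∀ α : ℝ,
      deriv (fun s => Real.log (ρ s)) (Θ α) =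
        Real.sqrt q * Real.sin (Θ α - α) / (Real.sqrt q * Real.cos (Θ α - α) + 1) ∧
      0 < (-1 : ℝ) ^ (j - 1) * (Real.sqrt q * Real.cos (Θ α - α) + 1)) :
    ∀ α : ℝ,
      HasDerivAt Θ
        (Real.sqrt (q + (q - 1) * (deriv (fun s => Real.log (ρ s)) (Θ α)) ^ 2) /
          (Real.sqrt (q + (q - 1) * (deriv (fun s => Real.log (ρ s)) (Θ α)) ^ 2) +
            (-1 : ℝ) ^ j * (Real.sqrt q * Real.cos (Θ α - α) + 1) *
              deriv (deriv (fun s => Real.log (ρ s))) (Θ α))) α ∧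
      0 < Real.sqrt (q + (q - 1) * (deriv (fun s => Real.log (ρ s)) (Θ α)) ^ 2) /
          (Real.sqrt (q + (q - 1) * (deriv (fun s => Real.log (ρ s)) (Θ α)) ^ 2) +
            (-1 : ℝ) ^ j * (Real.sqrt q * Real.cos (Θ α - α) + 1) *
              deriv (deriv (fun s => Real.log (ρ s))) (Θ α)) := by
  intro α₀
  obtain ⟨σ, hσ1, hσj1, hσj⟩ : ∃ σ : ℝ, (σ = 1 ∨ σ = -1) ∧ ((-1 : ℝ) ^ (j - 1) = σ) ∧
      ((-1 : ℝ) ^ j = -σ) := by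
    rcases hj with h | h <;> subst h
    · exact ⟨1, Or.inl rfl, by norm_num, by norm_num⟩
    · exact ⟨-1, Or.inr rfl, by norm_num, by norm_num⟩
  have hσ2 : σ ^ 2 = 1 := by rcases hσ1 with h | h <;> rw [h] <;> norm_num
  have hσle : σ ≤ 1 := by rcases hσ1 with h | h <;> rw [h] <;> norm_num
  have hq0 : (0 : ℝ) < q := by linarith
  have hsq1 : 1 < Real.sqrt q := by
    rw [show (1 : ℝ) = Real.sqrt 1 by simp]
    exact Real.sqrt_lt_sqrt (by norm_num) hq
  set sq := Real.sqrt q with hsqdef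
  have hsq2 : sq ^ 2 = q := Real.sq_sqrt hq0.le
  have hsq0 : (0 : ℝ) < sq := by linarith
  set L := fun s => Real.log (ρ s) with hLdef
  set g := deriv L with hgdef
  have hL2 : ContDiff ℝ 2 L := hC2.log (fun t => (hpos t).ne')
  have hg1 : ContDiff ℝ 1 g := by
    rw [hgdef]
    exact (contDiff_succ_iff_deriv.mp (by exact_mod_cast hL2)).2.2
  have hgd : Differentiable ℝ g := hg1.differentiable one_ne_zero
  set θ₀ := Θ α₀ with hθ₀
  set H := deriv g θ₀ with hHdef
  have hgθ : HasDerivAt g H θ₀ := (hgd θ₀).hasDerivAt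
  set G := g θ₀ with hGdef
  set Sf : ℝ → ℝ := fun t => Real.sqrt (q + (q - 1) * g t ^ 2) with hSfdef
  have hSin : ∀ t, 0 < q + (q - 1) * g t ^ 2 := fun t => by nlinarith [sq_nonneg (g t)]
  have hSfpos : ∀ t, 0 < Sf t := fun t => Real.sqrt_pos.mpr (hSin t)
  have hSfsq : ∀ t, Sf t ^ 2 = q + (q - 1) * g t ^ 2 := fun t => Real.sq_sqrt (hSin t).le
  have hSfge : ∀ t, sq ≤ Sf t := fun t => Real.sqrt_le_sqrt (by nlinarith [sq_nonneg (g t)])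
  have hSf1 : ∀ t, 1 < Sf t := fun t => lt_of_lt_of_le hsq1 (hSfge t)
  set cF : ℝ → ℝ := fun t => (σ * Sf t - g t ^ 2) / ((1 + g t ^ 2) * sq) with hcFdef
  set sF : ℝ → ℝ := fun t => g t * (1 + σ * Sf t) / ((1 + g t ^ 2) * sq) with hsFdef
  -- Key pointwise consequences of the branch equation
  have keyA : ∀ α, Real.cos (Θ α - α) = cF (Θ α) ∧ Real.sin (Θ α - α) = sF (Θ α) ∧
      (1 + g (Θ α) ^ 2) * (sq * Real.cos (Θ α - α) + 1) = 1 + σ * Sf (Θ α) := by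
    intro α
    obtain ⟨heq, hsgn⟩ := hbranch α
    rw [hσj1] at hsgn
    set co := Real.cos (Θ α - α) with hco
    set si := Real.sin (Θ α - α) with hsi
    set Gv := g (Θ α) with hGv
    set Sv := Sf (Θ α) with hSv
    have hu : (0 : ℝ) < 1 + Gv ^ 2 := by positivity
    have hDne : sq * co + 1 ≠ 0 := by
      intro hc
      rw [hc] at hsgn
      simp at hsgn
    have hGD : Gv * (sq * co + 1) = sq * si := by
      rw [heq]
      field_simp
    have pyth : si ^ 2 + co ^ 2 = 1 := Real.sin_sq_add_cos_sq _
    have hquad : (1 + Gv ^ 2) * (sq * co + 1) ^ 2 = q + 2 * (sq * co + 1) - 1 := by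
      linear_combination (Gv * (sq * co + 1) + sq * si) * hGD + sq ^ 2 * pyth + hsq2
    have hS2 : Sv ^ 2 = q + (q - 1) * Gv ^ 2 := hSfsq (Θ α)
    have hXsq : ((1 + Gv ^ 2) * (sq * co + 1) - 1) ^ 2 = (σ * Sv) ^ 2 := by
      linear_combination (1 + Gv ^ 2) * hquad - Sv ^ 2 * hσ2 - hS2
    have h2 : ((1 + Gv ^ 2) * (sq * co + 1) - 1 - σ * Sv) *
        ((1 + Gv ^ 2) * (sq * co + 1) - 1 + σ * Sv) = 0 := by
      linear_combination hXsq
    have hkey : (1 + Gv ^ 2) * (sq * co + 1) = 1 + σ * Sv := by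
      rcases mul_eq_zero.mp h2 with h3 | h3
      · linarith
      · exfalso
        have h4 : σ * ((1 + Gv ^ 2) * (sq * co + 1)) = σ - Sv := by
          linear_combination σ * h3 - Sv * hσ2
        nlinarith [mul_pos hsgn hu, hSf1 (Θ α)]
    refine ⟨?_, ?_, hkey⟩
    · rw [hcFdef]
      simp only
      rw [eq_div_iff (by positivity)]
      linear_combination hkey
    · rw [hsFdef]
      simp only
      rw [eq_div_iff (by positivity)]
      linear_combination Gv * hkey - (1 + Gv ^ 2) * hGD
  obtain ⟨hc0, hs0, hkey0⟩ := keyA α₀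
  rw [← hθ₀] at hc0 hs0 hkey0
  set φ₀ := θ₀ - α₀ with hφ₀def
  set c₀ := cF θ₀ with hc₀def
  set s₀ := sF θ₀ with hs₀def
  -- eventual bound on the angle difference
  have hcontφ : Continuous fun α => Θ α - α - φ₀ := (hΘcont.sub continuous_id).sub continuous_const
  have hev : ∀ᶠ α in 𝓝 α₀, |Θ α - α - φ₀| < π / 2 := by
    have h0 : |Θ α₀ - α₀ - φ₀| < π / 2 := by
      rw [hφ₀def, hθ₀]
      simpa using Real.pi_div_two_pos
    have hb := (hcontφ.abs.continuousAt (x := α₀)) (Iio_mem_nhds h0)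
    filter_upwards [hb] with α hα using hα
  set A : ℝ → ℝ := fun t => (t - φ₀) - Real.arcsin (sF t * c₀ - cF t * s₀) with hAdef
  have hleft : ∀ᶠ α in 𝓝 α₀, A (Θ α) = α := by
    filter_upwards [hev] with α hα
    obtain ⟨hc, hs, -⟩ := keyA α
    have hsin : sF (Θ α) * c₀ - cF (Θ α) * s₀ = Real.sin (Θ α - α - φ₀) := by
      rw [Real.sin_sub, hc, hs, hc0, hs0]
    have hA1 : A (Θ α) = (Θ α - φ₀) - (Θ α - α - φ₀) := by
      rw [hAdef]
      simp only
      rw [hsin, Real.arcsin_sin (by linarith [(abs_lt.mp hα).1]) (by linarith [(abs_lt.mp hα).2])]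
    rw [hA1]; ring
  -- derivative computations at θ₀
  have hu0 : (0 : ℝ) < 1 + G ^ 2 := by positivity
  set Sv := Sf θ₀ with hSvdef
  have hSv2 : Sv ^ 2 = q + (q - 1) * G ^ 2 := hSfsq θ₀
  have hSvpos : 0 < Sv := hSfpos θ₀
  have hSv1 : 1 < Sv := hSf1 θ₀
  have hSvge : sq ≤ Sv := hSfge θ₀
  have hg2 : HasDerivAt (fun t => g t ^ 2) (2 * G * H) θ₀ := by
    simpa [hGdef] using hgθ.fun_pow 2
  set dS := (q - 1) * (2 * G * H) / (2 * Sv) with hdSdef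
  have hSd : HasDerivAt Sf dS θ₀ := by
    have hin : HasDerivAt (fun t => q + (q - 1) * g t ^ 2) ((q - 1) * (2 * G * H)) θ₀ :=
      (hg2.const_mul (q - 1)).const_add q
    exact hin.sqrt (hSin θ₀).ne'
  have hden : HasDerivAt (fun t => (1 + g t ^ 2) * sq) (2 * G * H * sq) θ₀ :=
    (hg2.const_add 1).mul_const sq
  have hEne : ((1 + G ^ 2) * sq) ≠ 0 := by positivity
  set Cd := ((σ * dS - 2 * G * H) * ((1 + G ^ 2) * sq) - (σ * Sv - G ^ 2) * (2 * G * H * sq)) /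
      ((1 + G ^ 2) * sq) ^ 2 with hCddef
  set Dd := ((H * (1 + σ * Sv) + G * (σ * dS)) * ((1 + G ^ 2) * sq) -
      G * (1 + σ * Sv) * (2 * G * H * sq)) / ((1 + G ^ 2) * sq) ^ 2 with hDddef
  have hcd : HasDerivAt cF Cd θ₀ := by
    have h1 : HasDerivAt (fun t => σ * Sf t - g t ^ 2) (σ * dS - 2 * G * H) θ₀ :=
      (hSd.const_mul σ).sub hg2
    exact h1.div hden hEne
  have hsd : HasDerivAt sF Dd θ₀ := by
    have h1 : HasDerivAt (fun t => g t * (1 + σ * Sf t)) (H * (1 + σ * Sv) + G * (σ * dS)) θ₀ :=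
      hgθ.mul ((hSd.const_mul σ).const_add 1)
    exact h1.div hden hEne
  have hinner : HasDerivAt (fun t => sF t * c₀ - cF t * s₀) (Dd * c₀ - Cd * s₀) θ₀ :=
    (hsd.mul_const c₀).sub (hcd.mul_const s₀)
  have hx0 : sF θ₀ * c₀ - cF θ₀ * s₀ = 0 := by
    rw [hc₀def, hs₀def]; ring
  have harc : HasDerivAt Real.arcsin 1 (sF θ₀ * c₀ - cF θ₀ * s₀) := by
    rw [hx0]
    simpa using Real.hasDerivAt_arcsin (by norm_num : (0:ℝ) ≠ -1) (by norm_num : (0:ℝ) ≠ 1)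
  have hcomp : HasDerivAt (fun t => Real.arcsin (sF t * c₀ - cF t * s₀))
      (1 * (Dd * c₀ - Cd * s₀)) θ₀ := harc.comp (h := fun t => sF t * c₀ - cF t * s₀) θ₀ hinner
  have hA : HasDerivAt A (1 - 1 * (Dd * c₀ - Cd * s₀)) θ₀ :=
    ((hasDerivAt_id θ₀).sub_const φ₀).sub hcomp
  -- simplify the derivative value
  have hDv : sq * Real.cos φ₀ + 1 = (1 + σ * Sv) / (1 + G ^ 2) := by
    rw [eq_div_iff hu0.ne']
    linear_combination hkey0
  have hmain : Dd * c₀ - Cd * s₀ = σ * (1 + σ * Sv) * H / ((1 + G ^ 2) * Sv) := by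
    rw [hCddef, hDddef, hdSdef, hc₀def, hs₀def, hcFdef, hsFdef]
    simp only
    rw [← hSvdef, ← hGdef]
    have h1 : Sv ≠ 0 := hSvpos.ne'
    have h2 : (1 + G ^ 2) ≠ 0 := hu0.ne'
    have h3 : sq ≠ 0 := hsq0.ne'
    field_simp
    ring_nf
    linear_combination (H*Sv^3*(1+G^2) - H*Sv*(1+G^2)^2*sq^2) * hσ2 +
      (H*Sv*(1+G^2) + H*σ*(1+G^2)^2) * hSv2 - (H*Sv*(1+G^2)^2 + H*σ*(1+G^2)^2) * hsq2
  have hval : 1 - 1 * (Dd * c₀ - Cd * s₀) = (Sv + (-1) ^ j * (sq * Real.cos φ₀ + 1) * H) / Sv := by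
    rw [hσj, hmain, hDv]
    field_simp
    ring_nf
  -- positivity of the numerator-denominator
  have hσDpos : 0 < σ * (sq * Real.cos φ₀ + 1) := by
    have := (hbranch α₀).2
    rw [hσj1, ← hθ₀] at this
    exact this
  have hσDle : σ * (sq * Real.cos φ₀ + 1) ≤ sq + 1 := by
    have hc1 : Real.cos φ₀ ≤ 1 := Real.cos_le_one _
    have hc2 : -1 ≤ Real.cos φ₀ := Real.neg_one_le_cos _
    have h3 := mul_le_mul_of_nonneg_left hc1 hsq0.le
    have h4 := mul_le_mul_of_nonneg_left hc2 hsq0.le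
    rcases hσ1 with h | h <;> rw [h] <;> linarith
  have hHb : H < sq / (1 + sq) := by
    rw [hHdef]; exact hadm θ₀
  have hpos2 : 0 < Sv + (-1) ^ j * (sq * Real.cos φ₀ + 1) * H := by
    rw [hσj]
    rcases le_or_gt H 0 with h | h
    · have h5 : σ * (sq * Real.cos φ₀ + 1) * H ≤ 0 :=
        mul_nonpos_of_nonneg_of_nonpos hσDpos.le h
      nlinarith
    · have h5 : σ * (sq * Real.cos φ₀ + 1) * H ≤ (sq + 1) * H :=
        mul_le_mul_of_nonneg_right hσDle h.le
      have h6 : (sq + 1) * H < (sq + 1) * (sq / (1 + sq)) :=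
        mul_lt_mul_of_pos_left hHb (by linarith)
      have h7 : (sq + 1) * (sq / (1 + sq)) = sq := by
        field_simp
        ring
      linarith
  have hvalpos : 0 < 1 - 1 * (Dd * c₀ - Cd * s₀) := by
    rw [hval]
    exact div_pos hpos2 hSvpos
  have hΘd : HasDerivAt Θ (1 - 1 * (Dd * c₀ - Cd * s₀))⁻¹ α₀ :=
    HasDerivAt.of_local_left_inverse hΘcont.continuousAt hA hvalpos.ne' hleft
  have hfin : (1 - 1 * (Dd * c₀ - Cd * s₀))⁻¹ =
      Sv / (Sv + (-1) ^ j * (sq * Real.cos φ₀ + 1) * H) := by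
    rw [hval, inv_div]
  rw [hfin] at hΘd
  have hgoal : Real.sqrt (q + (q - 1) * g θ₀ ^ 2) = Sv := rfl
  constructor
  · exact hΘd
  · rw [hgoal]
    exact div_pos hSvpos hpos2
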